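/- Fix real numbers β and M and an integer n ≥ 0. For ε ∈ ℝ, ε ≠ 0, set q = −e^{ε}, b = −e^{βε}, and define A_n^{(0)}(ε) = M(q−1) q^{−3n−1} (q^n;q)_3 (bq^n;q)_3 / (1 − q^{−3}) − (q^{−n}−1)(1−bq^{n+2})(bq;q)_3 (q;q)_1. Then as ε → 0 (ε ≠ 0), A_n^{(0)}(ε)/ε^3 tends to −8M n(n+2)(n+1+β) + 8n(β+1)(β+3) if n is even, and to 8M(n+1)(n+β)(n+2+β) − 8(n+2+β)(β+1)(β+3) if n is odd. -/

import Mathlib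

/-- The q-shifted factorial `(a;q)_n = ∏_{k=0}^{n-1} (1 - a q^k)`. -/
noncomputable def qPoch (q a : ℝ) (n : ℕ) : ℝ :=
  ∏ k ∈ Finset.range n, (1 - a * q ^ k)

open Filter Real

lemma tendsto_one_sub_exp (a : ℝ) :
    Tendsto (fun ε : ℝ => (1 - Real.exp (a * ε)) / ε) (nhdsWithin 0 {0}ᶜ) (nhds (-a)) := by
  have h : HasDerivAt (fun ε : ℝ => 1 - Real.exp (a * ε)) (-a) 0 := by
    have h1 : HasDerivAt (fun ε : ℝ => Real.exp (a * ε)) a 0 := by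
      exact ((Real.hasDerivAt_exp (a * 0)).comp 0 ((hasDerivAt_id (0:ℝ)).const_mul a)).congr_deriv (by simp)
    exact ((hasDerivAt_const (0:ℝ) (1:ℝ)).sub h1).congr_deriv (by simp)
  have := hasDerivAt_iff_tendsto_slope.mp h
  refine this.congr fun ε => ?_
  simp [slope_fun_def, div_eq_inv_mul]

lemma tendsto_exp_aux (a : ℝ) :
    Tendsto (fun ε : ℝ => Real.exp (a * ε)) (nhdsWithin 0 {0}ᶜ) (nhds 1) := by
  have h : ContinuousAt (fun ε : ℝ => Real.exp (a * ε)) 0 := by fun_prop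
  have := h.tendsto
  simp only [mul_zero, Real.exp_zero] at this
  exact this.mono_left nhdsWithin_le_nhds

/-- The `q → −1` limit of `A_n^{(0)}/ε³` under the parametrization
`q = −e^ε`, `b = −e^{βε}`, where
`A_n^{(0)} = M(q−1) q^{−3n−1} (q^n;q)_3 (bq^n;q)_3 / (1−q^{−3})
 − (q^{−n}−1)(1−bq^{n+2})(bq;q)_3 (q;q)_1`:
the limit is `−8Mn(n+2)(n+1+β)+8n(β+1)(β+3)` for even `n` and
`8M(n+1)(n+β)(n+2+β)−8(n+2+β)(β+1)(β+3)` for odd `n`. -/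
theorem A0_limit (β M : ℝ) (n : ℕ) :
    Filter.Tendsto
      (fun ε : ℝ =>
        (let q : ℝ := -Real.exp ε
         let b : ℝ := -Real.exp (β * ε)
         M * (q - 1) * q ^ (-(3 * (n : ℤ)) - 1) * qPoch q (q ^ n) 3 * qPoch q (b * q ^ n) 3 /
             (1 - q ^ (-3 : ℤ)) -
           (q ^ (-(n : ℤ)) - 1) * (1 - b * q ^ (n + 2)) * qPoch q (b * q) 3 * qPoch q q 1) /
          ε ^ 3)
      (nhdsWithin 0 ({0}ᶜ : Set ℝ))
      (nhds (if Even n then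
          -8 * M * n * (n + 2) * (n + 1 + β) + 8 * n * (β + 1) * (β + 3)
        else
          8 * M * (n + 1) * (n + β) * (n + 2 + β) - 8 * (n + 2 + β) * (β + 1) * (β + 3))) := by
  rcases Nat.even_or_odd n with hn | hn
  · rw [if_pos hn]
    have hodd1 : Odd (3*n+1) := by rcases hn with ⟨m, rfl⟩; exact ⟨3*m, by ring⟩
    have hG : Tendsto (fun ε : ℝ =>
        M * (-(Real.exp (((1:ℕ):ℝ) * ε)) - 1) * (-((Real.exp (-((3*n+1:ℕ):ℝ) * ε)))) *
          (((1 - Real.exp (((n:ℕ):ℝ) * ε)) / ε) * (1 + Real.exp (((n+1:ℕ):ℝ) * ε)) *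
            ((1 - Real.exp (((n+2:ℕ):ℝ) * ε)) / ε)) *
          ((1 + Real.exp ((β + ((n:ℕ):ℝ)) * ε)) * ((1 - Real.exp ((β + ((n+1:ℕ):ℝ)) * ε)) / ε) *
            (1 + Real.exp ((β + ((n+2:ℕ):ℝ)) * ε))) /
          (1 + Real.exp (-((3:ℕ):ℝ) * ε)) -
        (-((1 - Real.exp (-((n:ℕ):ℝ) * ε)) / ε)) * (1 + Real.exp ((β + ((n+2:ℕ):ℝ)) * ε)) *
          (((1 - Real.exp ((β + ((1:ℕ):ℝ)) * ε)) / ε) * (1 + Real.exp ((β + ((2:ℕ):ℝ)) * ε)) *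
            ((1 - Real.exp ((β + ((3:ℕ):ℝ)) * ε)) / ε)) * (1 + Real.exp (((1:ℕ):ℝ) * ε)))
        (nhdsWithin 0 ({0}ᶜ : Set ℝ))
        (nhds (M * (-(1:ℝ) - 1) * (-(1:ℝ)) *
          ((-((n:ℕ):ℝ)) * (1 + 1) * (-((n+2:ℕ):ℝ))) *
          ((1 + 1) * (-(β + ((n+1:ℕ):ℝ))) * (1 + 1)) / (1 + 1) -
          (-(-(-((n:ℕ):ℝ)))) * (1 + 1) * ((-(β + ((1:ℕ):ℝ))) * (1+1) * (-(β + ((3:ℕ):ℝ)))) * (1 + 1))) := by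
      refine Tendsto.sub ?_ ?_
      · refine Tendsto.div ?_ (by simpa using ((tendsto_exp_aux (-((3:ℕ):ℝ))).const_add 1)) (by norm_num)
        refine Tendsto.mul (Tendsto.mul (Tendsto.mul ?_ ?_) ?_) ?_
        · exact tendsto_const_nhds.mul (by simpa using ((tendsto_exp_aux ((1:ℕ):ℝ)).neg.sub_const 1))
        · simpa using (tendsto_exp_aux (-((3*n+1:ℕ):ℝ))).neg
        · refine Tendsto.mul (Tendsto.mul ?_ ?_) ?_
          · simpa using tendsto_one_sub_exp ((n:ℕ):ℝ)
          · simpa using (tendsto_exp_aux ((n+1:ℕ):ℝ)).const_add 1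
          · simpa using tendsto_one_sub_exp ((n+2:ℕ):ℝ)
        · refine Tendsto.mul (Tendsto.mul ?_ ?_) ?_
          · simpa using (tendsto_exp_aux (β + ((n:ℕ):ℝ))).const_add 1
          · simpa using tendsto_one_sub_exp (β + ((n+1:ℕ):ℝ))
          · simpa using (tendsto_exp_aux (β + ((n+2:ℕ):ℝ))).const_add 1
      · refine Tendsto.mul (Tendsto.mul (Tendsto.mul ?_ ?_) ?_) ?_
        · simpa using (tendsto_one_sub_exp (-((n:ℕ):ℝ))).neg
        · simpa using (tendsto_exp_aux (β + ((n+2:ℕ):ℝ))).const_add 1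
        · refine Tendsto.mul (Tendsto.mul ?_ ?_) ?_
          · simpa using tendsto_one_sub_exp (β + ((1:ℕ):ℝ))
          · simpa using (tendsto_exp_aux (β + ((2:ℕ):ℝ))).const_add 1
          · simpa using tendsto_one_sub_exp (β + ((3:ℕ):ℝ))
        · simpa using (tendsto_exp_aux ((1:ℕ):ℝ)).const_add 1
    have hval : (M * (-(1:ℝ) - 1) * (-(1:ℝ)) *
          ((-((n:ℕ):ℝ)) * (1 + 1) * (-((n+2:ℕ):ℝ))) *
          ((1 + 1) * (-(β + ((n+1:ℕ):ℝ))) * (1 + 1)) / (1 + 1) -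
          (-(-(-((n:ℕ):ℝ)))) * (1 + 1) * ((-(β + ((1:ℕ):ℝ))) * (1+1) * (-(β + ((3:ℕ):ℝ)))) * (1 + 1))
        = -8 * M * n * (n + 2) * (n + 1 + β) + 8 * n * (β + 1) * (β + 3) := by
      push_cast; ring
    rw [← hval]
    refine Filter.Tendsto.congr' ?_ hG
    filter_upwards [self_mem_nhdsWithin] with ε hε
    have hε' : ε ≠ 0 := hε
    have hu : Real.exp ε ≠ 0 := (Real.exp_pos ε).ne'
    have hcast : ∀ k : ℕ, Real.exp ((k:ℝ) * ε) = Real.exp ε ^ k := fun k => Real.exp_nat_mul ε k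
    have hnegc : ∀ k : ℕ, Real.exp (-(k:ℝ) * ε) = (Real.exp ε ^ k)⁻¹ := fun k => by
      rw [neg_mul, Real.exp_neg, hcast]
    have hmix : ∀ k : ℕ, Real.exp ((β + (k:ℝ)) * ε) = Real.exp (β*ε) * Real.exp ε ^ k := fun k => by
      rw [add_mul, Real.exp_add, hcast]
    have hz1 : (-Real.exp ε) ^ (-(3*(n:ℤ)) - 1) = -((Real.exp ε ^ (3*n+1))⁻¹) := by
      rw [show -(3*(n:ℤ)) - 1 = -((3*n+1 : ℕ) : ℤ) by push_cast; ring, zpow_neg, zpow_natCast,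
        hodd1.neg_pow, inv_neg]
    have hz2 : (-Real.exp ε) ^ (-(n:ℤ)) = (Real.exp ε ^ n)⁻¹ := by
      rw [zpow_neg, zpow_natCast, hn.neg_pow]
    have hz3 : (-Real.exp ε) ^ (-3:ℤ) = -((Real.exp ε ^ 3)⁻¹) := by
      rw [show (-3:ℤ) = -((3:ℕ):ℤ) by norm_num, zpow_neg, zpow_natCast,
        Odd.neg_pow (by decide), inv_neg]
    have hp1 : (-Real.exp ε) ^ n = Real.exp ε ^ n := hn.neg_pow _
    have hp2 : (-Real.exp ε) ^ (n+2) = Real.exp ε ^ (n+2) := (hn.add even_two).neg_pow _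
    have hden : (1:ℝ) + (Real.exp ε ^ 3)⁻¹ ≠ 0 := by positivity
    simp only [qPoch, Finset.prod_range_succ, Finset.prod_range_zero, one_mul, pow_zero, pow_one,
      hz1, hz2, hz3, hp1, hp2, hcast, hnegc, hmix, neg_sq, sub_neg_eq_add]
    field_simp
    ring
  · rw [if_neg (Nat.not_even_iff_odd.mpr hn)]
    have heven1 : Even (3*n+1) := by rcases hn with ⟨m, rfl⟩; exact ⟨3*m+2, by ring⟩
    have hG : Tendsto (fun ε : ℝ =>
        M * (-(Real.exp (((1:ℕ):ℝ) * ε)) - 1) * (Real.exp (-((3*n+1:ℕ):ℝ) * ε)) *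
          ((1 + Real.exp (((n:ℕ):ℝ) * ε)) * ((1 - Real.exp (((n+1:ℕ):ℝ) * ε)) / ε) *
            (1 + Real.exp (((n+2:ℕ):ℝ) * ε))) *
          (((1 - Real.exp ((β + ((n:ℕ):ℝ)) * ε)) / ε) * (1 + Real.exp ((β + ((n+1:ℕ):ℝ)) * ε)) *
            ((1 - Real.exp ((β + ((n+2:ℕ):ℝ)) * ε)) / ε)) /
          (1 + Real.exp (-((3:ℕ):ℝ) * ε)) -
        (-(Real.exp (-((n:ℕ):ℝ) * ε)) - 1) * ((1 - Real.exp ((β + ((n+2:ℕ):ℝ)) * ε)) / ε) *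
          (((1 - Real.exp ((β + ((1:ℕ):ℝ)) * ε)) / ε) * (1 + Real.exp ((β + ((2:ℕ):ℝ)) * ε)) *
            ((1 - Real.exp ((β + ((3:ℕ):ℝ)) * ε)) / ε)) * (1 + Real.exp (((1:ℕ):ℝ) * ε)))
        (nhdsWithin 0 ({0}ᶜ : Set ℝ))
        (nhds (M * (-(1:ℝ) - 1) * 1 *
          ((1 + 1) * (-((n+1:ℕ):ℝ)) * (1 + 1)) *
          ((-(β + ((n:ℕ):ℝ))) * (1 + 1) * (-(β + ((n+2:ℕ):ℝ)))) / (1 + 1) -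
          (-(1:ℝ) - 1) * (-(β + ((n+2:ℕ):ℝ))) *
            ((-(β + ((1:ℕ):ℝ))) * (1+1) * (-(β + ((3:ℕ):ℝ)))) * (1 + 1))) := by
      refine Tendsto.sub ?_ ?_
      · refine Tendsto.div ?_ (by simpa using ((tendsto_exp_aux (-((3:ℕ):ℝ))).const_add 1)) (by norm_num)
        refine Tendsto.mul (Tendsto.mul (Tendsto.mul ?_ ?_) ?_) ?_
        · exact tendsto_const_nhds.mul (by simpa using ((tendsto_exp_aux ((1:ℕ):ℝ)).neg.sub_const 1))
        · simpa using tendsto_exp_aux (-((3*n+1:ℕ):ℝ))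
        · refine Tendsto.mul (Tendsto.mul ?_ ?_) ?_
          · simpa using (tendsto_exp_aux ((n:ℕ):ℝ)).const_add 1
          · simpa using tendsto_one_sub_exp ((n+1:ℕ):ℝ)
          · simpa using (tendsto_exp_aux ((n+2:ℕ):ℝ)).const_add 1
        · refine Tendsto.mul (Tendsto.mul ?_ ?_) ?_
          · simpa using tendsto_one_sub_exp (β + ((n:ℕ):ℝ))
          · simpa using (tendsto_exp_aux (β + ((n+1:ℕ):ℝ))).const_add 1
          · simpa using tendsto_one_sub_exp (β + ((n+2:ℕ):ℝ))
      · refine Tendsto.mul (Tendsto.mul (Tendsto.mul ?_ ?_) ?_) ?_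
        · simpa using ((tendsto_exp_aux (-((n:ℕ):ℝ))).neg.sub_const 1)
        · simpa using tendsto_one_sub_exp (β + ((n+2:ℕ):ℝ))
        · refine Tendsto.mul (Tendsto.mul ?_ ?_) ?_
          · simpa using tendsto_one_sub_exp (β + ((1:ℕ):ℝ))
          · simpa using (tendsto_exp_aux (β + ((2:ℕ):ℝ))).const_add 1
          · simpa using tendsto_one_sub_exp (β + ((3:ℕ):ℝ))
        · simpa using (tendsto_exp_aux ((1:ℕ):ℝ)).const_add 1
    have hval : (M * (-(1:ℝ) - 1) * 1 *
          ((1 + 1) * (-((n+1:ℕ):ℝ)) * (1 + 1)) *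
          ((-(β + ((n:ℕ):ℝ))) * (1 + 1) * (-(β + ((n+2:ℕ):ℝ)))) / (1 + 1) -
          (-(1:ℝ) - 1) * (-(β + ((n+2:ℕ):ℝ))) *
            ((-(β + ((1:ℕ):ℝ))) * (1+1) * (-(β + ((3:ℕ):ℝ)))) * (1 + 1))
        = 8 * M * (n + 1) * (n + β) * (n + 2 + β) - 8 * (n + 2 + β) * (β + 1) * (β + 3) := by
      push_cast; ring
    rw [← hval]
    refine Filter.Tendsto.congr' ?_ hG
    filter_upwards [self_mem_nhdsWithin] with ε hε
    have hε' : ε ≠ 0 := hε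
    have hu : Real.exp ε ≠ 0 := (Real.exp_pos ε).ne'
    have hcast : ∀ k : ℕ, Real.exp ((k:ℝ) * ε) = Real.exp ε ^ k := fun k => Real.exp_nat_mul ε k
    have hnegc : ∀ k : ℕ, Real.exp (-(k:ℝ) * ε) = (Real.exp ε ^ k)⁻¹ := fun k => by
      rw [neg_mul, Real.exp_neg, hcast]
    have hmix : ∀ k : ℕ, Real.exp ((β + (k:ℝ)) * ε) = Real.exp (β*ε) * Real.exp ε ^ k := fun k => by
      rw [add_mul, Real.exp_add, hcast]
    have hz1 : (-Real.exp ε) ^ (-(3*(n:ℤ)) - 1) = (Real.exp ε ^ (3*n+1))⁻¹ := by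
      rw [show -(3*(n:ℤ)) - 1 = -((3*n+1 : ℕ) : ℤ) by push_cast; ring, zpow_neg, zpow_natCast,
        heven1.neg_pow]
    have hz2 : (-Real.exp ε) ^ (-(n:ℤ)) = -((Real.exp ε ^ n)⁻¹) := by
      rw [zpow_neg, zpow_natCast, hn.neg_pow, inv_neg]
    have hz3 : (-Real.exp ε) ^ (-3:ℤ) = -((Real.exp ε ^ 3)⁻¹) := by
      rw [show (-3:ℤ) = -((3:ℕ):ℤ) by norm_num, zpow_neg, zpow_natCast,
        Odd.neg_pow (by decide), inv_neg]
    have hp1 : (-Real.exp ε) ^ n = -(Real.exp ε ^ n) := hn.neg_pow _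
    have hp2 : (-Real.exp ε) ^ (n+2) = -(Real.exp ε ^ (n+2)) := (hn.add_even even_two).neg_pow _
    have hden : (1:ℝ) + (Real.exp ε ^ 3)⁻¹ ≠ 0 := by positivity
    simp only [qPoch, Finset.prod_range_succ, Finset.prod_range_zero, one_mul, pow_zero, pow_one,
      hz1, hz2, hz3, hp1, hp2, hcast, hnegc, hmix, neg_sq, sub_neg_eq_add]
    field_simp
    ring
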